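/- arXiv:1912.08300 — 2 statements merged into one kernel-verified Lean document; each statement's English description precedes it below -/
import Mathlib

section
/- Let 0 < r < p, p > 1, and f : (0,∞) → [0,∞) nonincreasing with J = ∫₀^∞ f(t)^r t^{r/p-1} dt < ∞. For each integer k let I_k = {t : 2^k < f(t) ≤ 2^{k+1}}. Then J ≤ (p/r) · Σ_k 2^{(k+1)r} |I_k|^{r/p}, where |I_k| denotes the Lebesgue measure of I_k. -/
open MeasureTheory Set ENNReal

lemma key_rpow_int (α : ℝ) (hα0 : 0 < α) (hα1 : α < 1) (m : ℝ) (hm : 0 < m) :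
    ∫⁻ t in Ioo (0:ℝ) m, ENNReal.ofReal (t ^ (α - 1)) = ENNReal.ofReal (m ^ α / α) := by
  have hint : IntervalIntegrable (fun t : ℝ => t ^ (α - 1)) volume 0 m :=
    intervalIntegral.intervalIntegrable_rpow' (by linarith)
  have hIoo : IntegrableOn (fun t : ℝ => t ^ (α - 1)) (Ioo 0 m) volume :=
    hint.1.mono_set Ioo_subset_Ioc_self
  rw [← ofReal_integral_eq_lintegral_ofReal hIoo
    (ae_restrict_of_forall_mem measurableSet_Ioo fun t ht =>
      Real.rpow_nonneg ht.1.le _)]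
  congr 1
  have h2 : ∫ t in Ioo (0:ℝ) m, t ^ (α - 1) = ∫ t in (0:ℝ)..m, t ^ (α - 1) := by
    rw [intervalIntegral.integral_of_le hm.le, integral_Ioc_eq_integral_Ioo]
  rw [h2, integral_rpow (Or.inl (by linarith))]
  rw [Real.zero_rpow (by linarith : α - 1 + 1 ≠ 0), sub_add_cancel, sub_zero]

lemma key_est (α : ℝ) (hα0 : 0 < α) (hα1 : α < 1) (E : Set ℝ)
    (hE : MeasurableSet E) (hE0 : E ⊆ Ioi 0) :
    ∫⁻ t in E, ENNReal.ofReal (t ^ (α - 1)) ≤ ENNReal.ofReal (1 / α) * (volume E) ^ α := by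
  rcases eq_or_ne (volume E) ⊤ with htop | htop
  · rw [htop, ENNReal.top_rpow_of_pos hα0, ENNReal.mul_top]
    · exact le_top
    · simp only [ne_eq, ENNReal.ofReal_eq_zero, not_le]
      positivity
  rcases eq_or_ne (volume E) 0 with h0 | h0
  · rw [setLIntegral_measure_zero _ _ h0]; exact zero_le
  set m := (volume E).toReal with hmdef
  have hm : 0 < m := ENNReal.toReal_pos h0 htop
  have hvol : volume E = ENNReal.ofReal m := (ENNReal.ofReal_toReal htop).symm
  have hvolI : volume (Ioo (0:ℝ) m) = volume E := by
    rw [Real.volume_Ioo, sub_zero, hvol]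
  have hmeasIoo : MeasurableSet (Ioo (0:ℝ) m) := measurableSet_Ioo
  have key1 : ∫⁻ t in E, ENNReal.ofReal (t ^ (α - 1)) ≤
      ∫⁻ t in Ioo 0 m, ENNReal.ofReal (t ^ (α - 1)) := by
    have hsplitE : ∫⁻ t in E, ENNReal.ofReal (t ^ (α - 1))
        = (∫⁻ t in E ∩ Ioo 0 m, ENNReal.ofReal (t ^ (α - 1)))
          + ∫⁻ t in E \ Ioo 0 m, ENNReal.ofReal (t ^ (α - 1)) := by
      rw [← lintegral_union (hE.diff hmeasIoo)
        (disjoint_sdiff_right.mono_left inter_subset_right), inter_union_diff]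
    have hsplitI : ∫⁻ t in Ioo 0 m, ENNReal.ofReal (t ^ (α - 1))
        = (∫⁻ t in E ∩ Ioo 0 m, ENNReal.ofReal (t ^ (α - 1)))
          + ∫⁻ t in Ioo 0 m \ E, ENNReal.ofReal (t ^ (α - 1)) := by
      rw [← lintegral_union (hmeasIoo.diff hE) (disjoint_sdiff_right.mono_left
        inter_subset_left), inter_comm E, inter_union_diff]
    rw [hsplitE, hsplitI]
    refine add_le_add le_rfl ?_
    have hmeas_eq : volume (E \ Ioo 0 m) = volume (Ioo 0 m \ E) := by
      have h1 : volume (E \ (E ∩ Ioo 0 m)) = volume E - volume (E ∩ Ioo 0 m) :=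
        measure_diff inter_subset_left (hE.inter hmeasIoo).nullMeasurableSet
          (ne_top_of_le_ne_top htop (measure_mono inter_subset_left))
      have h2 : volume (Ioo 0 m \ (Ioo 0 m ∩ E)) = volume (Ioo 0 m) - volume (Ioo 0 m ∩ E) :=
        measure_diff inter_subset_left (hmeasIoo.inter hE).nullMeasurableSet
          (ne_top_of_le_ne_top (hvolI ▸ htop) (measure_mono inter_subset_left))
      rw [diff_self_inter] at h1 h2
      rw [h1, h2, hvolI, inter_comm]
    calc ∫⁻ t in E \ Ioo 0 m, ENNReal.ofReal (t ^ (α - 1))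
        ≤ ∫⁻ _ in E \ Ioo 0 m, ENNReal.ofReal (m ^ (α - 1)) := by
          apply setLIntegral_mono' (hE.diff hmeasIoo)
          intro t ht
          have ht0 : 0 < t := hE0 ht.1
          have htm : m ≤ t := by
            by_contra h
            exact ht.2 ⟨ht0, lt_of_not_ge h⟩
          exact ENNReal.ofReal_le_ofReal
            (Real.rpow_le_rpow_of_nonpos hm htm (by linarith))
      _ = ENNReal.ofReal (m ^ (α - 1)) * volume (E \ Ioo 0 m) := setLIntegral_const _ _
      _ = ENNReal.ofReal (m ^ (α - 1)) * volume (Ioo 0 m \ E) := by rw [hmeas_eq]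
      _ = ∫⁻ _ in Ioo 0 m \ E, ENNReal.ofReal (m ^ (α - 1)) := (setLIntegral_const _ _).symm
      _ ≤ ∫⁻ t in Ioo 0 m \ E, ENNReal.ofReal (t ^ (α - 1)) := by
          apply setLIntegral_mono' (hmeasIoo.diff hE)
          intro t ht
          exact ENNReal.ofReal_le_ofReal
            (Real.rpow_le_rpow_of_nonpos ht.1.1 ht.1.2.le (by linarith))
  calc ∫⁻ t in E, ENNReal.ofReal (t ^ (α - 1))
      ≤ ∫⁻ t in Ioo 0 m, ENNReal.ofReal (t ^ (α - 1)) := key1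
    _ = ENNReal.ofReal (m ^ α / α) := key_rpow_int α hα0 hα1 m hm
    _ = ENNReal.ofReal (1 / α) * (volume E) ^ α := by
        rw [hvol, ENNReal.ofReal_rpow_of_pos hm, ← ENNReal.ofReal_mul (by positivity)]
        rw [div_eq_mul_inv, mul_comm, one_div]

/-- Dyadic level-set estimate (6) for the Lorentz quasinorm. -/
theorem stmt_1 (p r : ℝ) (hr : 0 < r) (hrp : r < p) (hp : 1 < p)
    (f : ℝ → ℝ) (hf0 : ∀ t, 0 < t → 0 ≤ f t) (hf : AntitoneOn f (Ioi 0))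
    (hJ : (∫⁻ t in Ioi (0:ℝ), ENNReal.ofReal (f t ^ r * t ^ (r / p - 1))) < ⊤) :
    (∫⁻ t in Ioi (0:ℝ), ENNReal.ofReal (f t ^ r * t ^ (r / p - 1)))
      ≤ ENNReal.ofReal (p / r) *
        ∑' k : ℤ, ENNReal.ofReal ((2:ℝ) ^ (((k:ℝ) + 1) * r)) *
          (volume {t ∈ Ioi (0:ℝ) | (2:ℝ) ^ k < f t ∧ f t ≤ (2:ℝ) ^ (k + 1)}) ^ (r / p) := by
  have hp0 : (0:ℝ) < p := by linarith
  have hα0 : (0:ℝ) < r / p := div_pos hr hp0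
  have hα1 : r / p < 1 := (div_lt_one hp0).mpr hrp
  set g : ℝ → ℝ≥0∞ := fun t => ENNReal.ofReal (f t ^ r * t ^ (r / p - 1)) with hg
  set A : ℤ → Set ℝ := fun k => {t ∈ Ioi (0:ℝ) | (2:ℝ) ^ k < f t ∧ f t ≤ (2:ℝ) ^ (k + 1)}
    with hA
  set S : ℤ → Set ℝ := fun k => {t ∈ Ioi (0:ℝ) | (2:ℝ) ^ k < f t} with hS
  have hmeasS : ∀ k, MeasurableSet (S k) := by
    intro k
    apply Set.OrdConnected.measurableSet
    constructor
    intro x hx y hy z hz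
    exact ⟨lt_of_lt_of_le hx.1 hz.1, lt_of_lt_of_le hy.2 (hf (lt_of_lt_of_le hx.1 hz.1)
      hy.1 hz.2)⟩
  have hAS : ∀ k, A k = S k \ S (k + 1) := by
    intro k
    ext t
    simp only [hA, hS, mem_setOf_eq, mem_diff, mem_Ioi]
    constructor
    · rintro ⟨ht, h1, h2⟩
      exact ⟨⟨ht, h1⟩, fun h => absurd h.2 (not_lt.mpr h2)⟩
    · rintro ⟨⟨ht, h1⟩, h2⟩
      exact ⟨ht, h1, not_lt.mp fun h => h2 ⟨ht, h⟩⟩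
  have hmeasA : ∀ k, MeasurableSet (A k) := fun k =>
    (hAS k) ▸ ((hmeasS k).diff (hmeasS (k + 1)))
  have hdisj : Pairwise (Function.onFun Disjoint A) := by
    have key : ∀ i j : ℤ, i < j → Disjoint (A i) (A j) := by
      intro i j hij
      rw [disjoint_left]
      rintro t ⟨_, _, h2⟩ ⟨_, h3, _⟩
      have : (2:ℝ) ^ (i + 1) ≤ (2:ℝ) ^ j :=
        zpow_le_zpow_right₀ (by norm_num) (by omega)
      linarith
    intro i j hij
    rcases hij.lt_or_gt with h | h
    · exact key i j h
    · exact (key j i h).symm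
  have hAsub : ∀ k, A k ⊆ Ioi (0:ℝ) := fun k t ht => ht.1
  set U : Set ℝ := ⋃ k, A k with hU
  have hmeasU : MeasurableSet U := MeasurableSet.iUnion hmeasA
  have hUsub : U ⊆ Ioi (0:ℝ) := iUnion_subset hAsub
  -- points of Ioi 0 with f t > 0 lie in some A k
  have hcover : ∀ t, t ∈ Ioi (0:ℝ) → 0 < f t → t ∈ U := by
    intro t ht hft
    set x := Real.logb 2 (f t) with hx
    refine mem_iUnion.mpr ⟨⌈x⌉ - 1, ?_, ?_, ?_⟩
    · exact ht
    · have h1 : ((⌈x⌉ - 1 : ℤ) : ℝ) < x := by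
        push_cast
        linarith [Int.ceil_lt_add_one x]
      have := (Real.lt_logb_iff_rpow_lt one_lt_two hft).mp h1
      rwa [Real.rpow_intCast] at this
    · have h2 : x ≤ ((⌈x⌉ - 1 + 1 : ℤ) : ℝ) := by
        push_cast
        linarith [Int.le_ceil x]
      have := (Real.logb_le_iff_le_rpow one_lt_two hft).mp h2
      rwa [Real.rpow_intCast] at this
  -- split the integral
  have hsplit : ∫⁻ t in Ioi (0:ℝ), g t
      = (∫⁻ t in U, g t) + ∫⁻ t in Ioi (0:ℝ) \ U, g t := by
    rw [← lintegral_union (measurableSet_Ioi.diff hmeasU) disjoint_sdiff_right,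
      union_diff_cancel hUsub]
  have hzero : ∫⁻ t in Ioi (0:ℝ) \ U, g t = 0 := by
    apply le_antisymm _ zero_le
    have : ∫⁻ t in Ioi (0:ℝ) \ U, g t ≤ ∫⁻ _ in Ioi (0:ℝ) \ U, 0 := by
      apply setLIntegral_mono' (measurableSet_Ioi.diff hmeasU)
      intro t ht
      have hft : f t = 0 := by
        rcases eq_or_lt_of_le (hf0 t ht.1) with h | h
        · exact h.symm
        · exact absurd (hcover t ht.1 h) ht.2
      simp [hg, hft, Real.zero_rpow hr.ne']
    simpa using this
  have hsum : ∫⁻ t in U, g t = ∑' k : ℤ, ∫⁻ t in A k, g t :=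
    lintegral_iUnion hmeasA hdisj g
  -- estimate each piece
  have hpiece : ∀ k : ℤ, ∫⁻ t in A k, g t
      ≤ ENNReal.ofReal (p / r) *
        (ENNReal.ofReal ((2:ℝ) ^ (((k:ℝ) + 1) * r)) * (volume (A k)) ^ (r / p)) := by
    intro k
    have hc : ((2:ℝ) ^ (k + 1 : ℤ)) ^ r = (2:ℝ) ^ (((k:ℝ) + 1) * r) := by
      rw [← Real.rpow_intCast 2 (k + 1), ← Real.rpow_mul (by norm_num)]
      push_cast
      ring_nf
    calc ∫⁻ t in A k, g t
        ≤ ∫⁻ t in A k, ENNReal.ofReal ((2:ℝ) ^ (((k:ℝ) + 1) * r)) *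
            ENNReal.ofReal (t ^ (r / p - 1)) := by
          apply setLIntegral_mono' (hmeasA k)
          intro t ht
          rw [hg, ← ENNReal.ofReal_mul (by positivity)]
          apply ENNReal.ofReal_le_ofReal
          have htpos : (0:ℝ) < t := ht.1
          have hfr : f t ^ r ≤ (2:ℝ) ^ (((k:ℝ) + 1) * r) := by
            rw [← hc]
            exact Real.rpow_le_rpow (hf0 t htpos) ht.2.2 hr.le
          exact mul_le_mul_of_nonneg_right hfr (Real.rpow_nonneg htpos.le _)
      _ = ENNReal.ofReal ((2:ℝ) ^ (((k:ℝ) + 1) * r)) *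
            ∫⁻ t in A k, ENNReal.ofReal (t ^ (r / p - 1)) :=
          lintegral_const_mul' _ _ ENNReal.ofReal_ne_top
      _ ≤ ENNReal.ofReal ((2:ℝ) ^ (((k:ℝ) + 1) * r)) *
            (ENNReal.ofReal (1 / (r / p)) * (volume (A k)) ^ (r / p)) := by
          gcongr
          exact key_est (r / p) hα0 hα1 (A k) (hmeasA k) (hAsub k)
      _ = ENNReal.ofReal (p / r) *
            (ENNReal.ofReal ((2:ℝ) ^ (((k:ℝ) + 1) * r)) * (volume (A k)) ^ (r / p)) := by
          rw [one_div_div]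
          ring
  calc ∫⁻ t in Ioi (0:ℝ), g t
      = ∑' k : ℤ, ∫⁻ t in A k, g t := by rw [hsplit, hzero, add_zero, hsum]
    _ ≤ ∑' k : ℤ, ENNReal.ofReal (p / r) *
          (ENNReal.ofReal ((2:ℝ) ^ (((k:ℝ) + 1) * r)) * (volume (A k)) ^ (r / p)) :=
        ENNReal.tsum_le_tsum hpiece
    _ = ENNReal.ofReal (p / r) * ∑' k : ℤ,
          ENNReal.ofReal ((2:ℝ) ^ (((k:ℝ) + 1) * r)) * (volume (A k)) ^ (r / p) :=
        ENNReal.tsum_mul_left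
end

section
/- Let 0 < r < s ≤ ∞ and p > 0. If f : (0,∞) → [0,∞) is nonincreasing and ∫₀^∞ f(t)^r t^{r/p-1} dt < ∞, then ∫₀^∞ f(t)^s t^{s/p-1} dt < ∞ (with the usual modification sup_t f(t) t^{1/p} < ∞ when s = ∞). In particular L(p,r) ⊆ L(p,s) for r < s. -/
open MeasureTheory Set ENNReal

/-- Monotonicity of Lorentz spaces in the second index: L(p,r) ⊆ L(p,s) for r < s ≤ ∞. -/
theorem stmt_16 (p r : ℝ) (hp : 0 < p) (hr : 0 < r)
    (f : ℝ → ℝ) (hf0 : ∀ t, 0 < t → 0 ≤ f t) (hf : AntitoneOn f (Ioi 0))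
    (hfin : (∫⁻ t in Ioi (0:ℝ), ENNReal.ofReal (f t ^ r * t ^ (r / p - 1))) < ⊤) :
    (∀ s : ℝ, r < s →
        (∫⁻ t in Ioi (0:ℝ), ENNReal.ofReal (f t ^ s * t ^ (s / p - 1))) < ⊤) ∧
      (⨆ t ∈ Ioi (0:ℝ), ENNReal.ofReal (f t * t ^ (1 / p))) < ⊤ := by
  set I := (∫⁻ t in Ioi (0:ℝ), ENNReal.ofReal (f t ^ r * t ^ (r / p - 1))) with hIdef
  have hrp : 0 < r / p := div_pos hr hp
  set A : ℝ := (r / p) * I.toReal with hAdef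
  have hA0 : 0 ≤ A := mul_nonneg hrp.le ENNReal.toReal_nonneg
  set B : ℝ := A ^ (1 / r) with hBdef
  have hB0 : 0 ≤ B := Real.rpow_nonneg hA0 _
  have key : ∀ t : ℝ, 0 < t → f t * t ^ (1 / p) ≤ B := by
    intro t ht
    have hft : 0 ≤ f t := hf0 t ht
    -- the integral of u ^ (r/p - 1) over (0, t]
    have hint : ∫ u in Ioc (0:ℝ) t, f t ^ r * u ^ (r / p - 1) = f t ^ r * (t ^ (r / p) / (r / p)) := by
      rw [MeasureTheory.integral_const_mul, ← intervalIntegral.integral_of_le ht.le,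
        integral_rpow (Or.inl (by linarith))]
      rw [sub_add_cancel, Real.zero_rpow (ne_of_gt hrp)]
      ring_nf
    have hintg : IntegrableOn (fun u : ℝ => f t ^ r * u ^ (r / p - 1)) (Ioc 0 t) := by
      have := (intervalIntegral.intervalIntegrable_rpow' (a := (0:ℝ)) (b := t)
        (show (-1:ℝ) < r / p - 1 by linarith)).const_mul (f t ^ r)
      exact (intervalIntegrable_iff_integrableOn_Ioc_of_le ht.le).mp this
    have h1 : ENNReal.ofReal (f t ^ r * (t ^ (r / p) / (r / p))) ≤ I := by
      rw [← hint, MeasureTheory.ofReal_integral_eq_lintegral_ofReal hintg]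
      · calc (∫⁻ u in Ioc (0:ℝ) t, ENNReal.ofReal (f t ^ r * u ^ (r / p - 1)))
            ≤ ∫⁻ u in Ioc (0:ℝ) t, ENNReal.ofReal (f u ^ r * u ^ (r / p - 1)) := by
              refine lintegral_mono_ae ((ae_restrict_iff' measurableSet_Ioc).2 (ae_of_all _ ?_))
              intro u hu
              refine ENNReal.ofReal_le_ofReal (mul_le_mul_of_nonneg_right ?_
                (Real.rpow_nonneg hu.1.le _))
              exact Real.rpow_le_rpow hft (hf (mem_Ioi.mpr hu.1) (mem_Ioi.mpr ht) hu.2) hr.le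
          _ ≤ I := by
              rw [hIdef]
              exact lintegral_mono_set (Ioc_subset_Ioi_self.trans (by simp))
      · refine (ae_restrict_iff' measurableSet_Ioc).2 (ae_of_all _ fun u hu => ?_)
        exact mul_nonneg (Real.rpow_nonneg hft _) (Real.rpow_nonneg hu.1.le _)
    have h2 : f t ^ r * (t ^ (r / p) / (r / p)) ≤ I.toReal := by
      have := ENNReal.toReal_mono hfin.ne h1
      rwa [ENNReal.toReal_ofReal (mul_nonneg (Real.rpow_nonneg hft _)
        (div_nonneg (Real.rpow_nonneg ht.le _) hrp.le))] at this
    have h3 : f t ^ r * t ^ (r / p) ≤ A := by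
      rw [mul_div_assoc'] at h2
      rw [hAdef, mul_comm (r / p)]
      exact (div_le_iff₀ hrp).mp h2
    have h4 : (f t ^ r * t ^ (r / p)) ^ (1 / r) ≤ B := by
      exact Real.rpow_le_rpow (mul_nonneg (Real.rpow_nonneg hft _)
        (Real.rpow_nonneg ht.le _)) h3 (by positivity)
    have hexp : r / p * (1 / r) = 1 / p := by
      field_simp
    calc f t * t ^ (1 / p) = (f t ^ r * t ^ (r / p)) ^ (1 / r) := by
          rw [Real.mul_rpow (Real.rpow_nonneg hft _) (Real.rpow_nonneg ht.le _),
            ← Real.rpow_mul hft, ← Real.rpow_mul ht.le, hexp,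
            mul_one_div, div_self hr.ne', Real.rpow_one]
      _ ≤ B := h4
  constructor
  · intro s hs
    have hsr : 0 < s - r := by linarith
    have hBsr : 0 ≤ B ^ (s - r) := Real.rpow_nonneg hB0 _
    calc (∫⁻ t in Ioi (0:ℝ), ENNReal.ofReal (f t ^ s * t ^ (s / p - 1)))
        ≤ ∫⁻ t in Ioi (0:ℝ),
            ENNReal.ofReal (B ^ (s - r)) * ENNReal.ofReal (f t ^ r * t ^ (r / p - 1)) := by
          refine lintegral_mono_ae ((ae_restrict_iff' measurableSet_Ioi).2 (ae_of_all _ ?_))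
          intro t ht
          have hft : 0 ≤ f t := hf0 t ht
          have hid : f t ^ s * t ^ (s / p - 1)
              = (f t * t ^ (1 / p)) ^ (s - r) * (f t ^ r * t ^ (r / p - 1)) := by
            rw [Real.mul_rpow hft (Real.rpow_nonneg (le_of_lt ht) _),
              ← Real.rpow_mul (le_of_lt ht)]
            have h1 : f t ^ (s - r) * f t ^ r = f t ^ s := by
              rw [← Real.rpow_add' hft (by linarith), sub_add_cancel]
            have h2 : (t:ℝ) ^ (1 / p * (s - r)) * t ^ (r / p - 1) = t ^ (s / p - 1) := by
              rw [← Real.rpow_add ht]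
              congr 1
              field_simp
              ring
            calc f t ^ s * t ^ (s / p - 1)
                = (f t ^ (s - r) * f t ^ r) * (t ^ (1 / p * (s - r)) * t ^ (r / p - 1)) := by
                  rw [h1, h2]
              _ = f t ^ (s - r) * t ^ (1 / p * (s - r)) * (f t ^ r * t ^ (r / p - 1)) := by ring
          rw [hid, ← ENNReal.ofReal_mul hBsr]
          refine ENNReal.ofReal_le_ofReal (mul_le_mul_of_nonneg_right ?_
            (mul_nonneg (Real.rpow_nonneg hft _) (Real.rpow_nonneg (le_of_lt ht) _)))
          exact Real.rpow_le_rpow (mul_nonneg hft (Real.rpow_nonneg (le_of_lt ht) _))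
            (key t ht) hsr.le
      _ = ENNReal.ofReal (B ^ (s - r)) * I := by
          rw [lintegral_const_mul' _ _ ENNReal.ofReal_ne_top, hIdef]
      _ < ⊤ := ENNReal.mul_lt_top ENNReal.ofReal_lt_top hfin
  · refine lt_of_le_of_lt (iSup₂_le fun t ht => ?_) (show ENNReal.ofReal B < ⊤ from ENNReal.ofReal_lt_top)
    exact ENNReal.ofReal_le_ofReal (key t ht)
end
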